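/- For the Suslov system with zero external field (b = 0), the density ρ(ω₁, ω₂, γ) = (I₁₃ω₁ + I₂₃ω₂)⁻¹ defines an invariant measure: the vector field v of the system satisfies the Liouville equation div(ρv) = 0 on the open set where I₁₃ω₁ + I₂₃ω₂ ≠ 0. -/

import Mathlib

open ContinuousLinearMap

set_option maxHeartbeats 1600000

/-- For the Suslov system with `b = 0`, the density `ρ = (I₁₃ω₁ + I₂₃ω₂)⁻¹`
satisfies the Liouville equation `div(ρ v) = 0` where `I₁₃ω₁ + I₂₃ω₂ ≠ 0`. -/
theorem suslov_singular_invariant_measure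
    (I11 I22 I13 I23 : ℝ) (hI11 : 0 < I11) (hI22 : 0 < I22)
    (hI : ¬(I13 = 0 ∧ I23 = 0))
    (v : (Fin 5 → ℝ) → (Fin 5 → ℝ))
    (hv : v = fun x => ![-x 1 * (I13 * x 0 + I23 * x 1) / I11,
                          x 0 * (I13 * x 0 + I23 * x 1) / I22,
                          -x 4 * x 1,
                          x 4 * x 0,
                          x 2 * x 1 - x 3 * x 0])
    (ρ : (Fin 5 → ℝ) → ℝ)
    (hρ : ρ = fun x => (I13 * x 0 + I23 * x 1)⁻¹) :
    ∀ x : Fin 5 → ℝ, I13 * x 0 + I23 * x 1 ≠ 0 →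
      ∑ i, fderiv ℝ (fun y => ρ y * v y i) x (Pi.single i 1) = 0 := by
  subst hv hρ
  intro x hx
  have hp : ∀ j : Fin 5, HasFDerivAt (fun y : Fin 5 → ℝ => y j)
      (proj j : (Fin 5 → ℝ) →L[ℝ] ℝ) x := fun j => hasFDerivAt_apply j x
  have hL : HasFDerivAt (fun y : Fin 5 → ℝ => I13 * y 0 + I23 * y 1)
      ((I13 • (proj 0) + I23 • (proj 1)) : (Fin 5 → ℝ) →L[ℝ] ℝ) x :=
    ((hp 0).const_mul I13).add ((hp 1).const_mul I23)
  have hR : HasFDerivAt (fun y : Fin 5 → ℝ => (I13 * y 0 + I23 * y 1)⁻¹)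
      ((-((I13 * x 0 + I23 * x 1) ^ 2)⁻¹) • ((I13 • (proj 0) + I23 • (proj 1)) : (Fin 5 → ℝ) →L[ℝ] ℝ)) x :=
    (hasDerivAt_inv hx).comp_hasFDerivAt x hL
  rw [Fin.sum_univ_five]
  simp only [Matrix.cons_val_zero, Matrix.cons_val_one, Matrix.head_cons,
    Matrix.cons_val_two, Matrix.tail_cons, Matrix.cons_val_three, Matrix.cons_val_four,
    Matrix.head_fin_const, div_eq_mul_inv]
  erw [(hR.mul (((hp 1).neg.mul hL).mul_const I11⁻¹)).fderiv,
      (hR.mul (((hp 0).mul hL).mul_const I22⁻¹)).fderiv,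
      (hR.mul ((hp 4).neg.mul (hp 1))).fderiv,
      (hR.mul ((hp 4).mul (hp 0))).fderiv,
      (hR.mul (((hp 2).mul (hp 1)).sub ((hp 3).mul (hp 0)))).fderiv]
  simp only [ContinuousLinearMap.add_apply, ContinuousLinearMap.smul_apply,
    ContinuousLinearMap.sub_apply, ContinuousLinearMap.neg_apply,
    ContinuousLinearMap.proj_apply, Pi.single_apply, smul_eq_mul,
    ContinuousLinearMap.coe_smul', Pi.smul_apply, Pi.mul_apply, Pi.neg_apply]
  simp only [Fin.isValue, Fin.reduceEq, reduceIte, ite_true, ite_false, mul_one, mul_zero,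
    zero_mul, one_mul, add_zero, zero_add, neg_zero, sub_zero, zero_sub, neg_neg, mul_neg, neg_mul]
  field_simp
  ring
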